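/- Let p ∈ (0,1) and Q = {Q1,...,Qn} distinct probability measures. The replicated Max-ES rMES_p^Q(X) = ES_p^P(max_{i=1,...,n} X_i), where X1,...,Xn are independent under P with X_i distributed as X under Q_i, is a coherent and comonotonic-additive risk measure on bounded random variables. -/

import Mathlib

open MeasureTheory Set
open scoped ENNReal

noncomputable def VaR {Ω : Type*} [MeasurableSpace Ω] (Q : Measure Ω) (X : Ω → ℝ) (p : ℝ) : ℝ :=
  sInf {x : ℝ | p ≤ (Q {ω | X ω ≤ x}).toReal}

noncomputable def ES {Ω : Type*} [MeasurableSpace Ω] (Q : Measure Ω) (X : Ω → ℝ) (p : ℝ) : ℝ :=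
  (1 - p)⁻¹ * ∫ q in p..1, VaR Q X q

def Comonotonic {Ω : Type*} (X Y : Ω → ℝ) : Prop :=
  ∀ ω ω', 0 ≤ (X ω - X ω') * (Y ω - Y ω')

def BddRV {Ω : Type*} (X : Ω → ℝ) : Prop := ∃ M, ∀ ω, |X ω| ≤ M

/-- Replicated Max-ES: the ES, under the product measure `Π_i Q_i`, of the maximum of
the independent copies `ω ↦ X (ω i)` (which are independent with `X (ω i) ∼ Q_i`-law of `X`). -/
noncomputable def rMES {Ω : Type*} [MeasurableSpace Ω] {n : ℕ} (Q : Fin n → Measure Ω)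
    (X : Ω → ℝ) (p : ℝ) : ℝ :=
  ES (Measure.pi Q) (fun ω => ⨆ i, X (ω i)) p

namespace RMESAux

variable {Ω : Type*} [MeasurableSpace Ω] {P : Measure Ω} {Z U V : Ω → ℝ} {M N q x p : ℝ}



lemma cdf_mono (P : Measure Ω) [IsProbabilityMeasure P] (Z : Ω → ℝ) :
    Monotone fun x => (P {ω | Z ω ≤ x}).toReal := fun a b hab =>
  ENNReal.toReal_mono (measure_ne_top _ _) (measure_mono fun ω (h : Z ω ≤ a) => h.trans hab)

lemma cdf_top [IsProbabilityMeasure P] (hM : ∀ ω, |Z ω| ≤ M) :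
    (P {ω | Z ω ≤ M}).toReal = 1 := by
  have h : {ω | Z ω ≤ M} = Set.univ := eq_univ_of_forall fun ω => (abs_le.1 (hM ω)).2
  simp [h]

lemma cdf_bot [IsProbabilityMeasure P] (hM : ∀ ω, |Z ω| ≤ M) (hx : x < -M) :
    (P {ω | Z ω ≤ x}).toReal = 0 := by
  have h : {ω | Z ω ≤ x} = ∅ :=
    eq_empty_iff_forall_notMem.2 fun ω (h : Z ω ≤ x) =>
      absurd (le_trans (neg_le_of_abs_le (hM ω)) h) (not_le.2 hx)
  simp [h]

lemma var_bddBelow [IsProbabilityMeasure P] (hM : ∀ ω, |Z ω| ≤ M) (hq0 : 0 < q) :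
    BddBelow {x : ℝ | q ≤ (P {ω | Z ω ≤ x}).toReal} := by
  refine ⟨-M, fun x hx => ?_⟩
  by_contra hc
  push_neg at hc
  rw [mem_setOf_eq, cdf_bot hM hc] at hx
  exact absurd (lt_of_lt_of_le hq0 hx) (lt_irrefl 0)

lemma var_mem_M [IsProbabilityMeasure P] (hM : ∀ ω, |Z ω| ≤ M) (hq1 : q ≤ 1) :
    M ∈ {x : ℝ | q ≤ (P {ω | Z ω ≤ x}).toReal} := by
  rw [mem_setOf_eq, cdf_top hM]; exact hq1

/-- The CDF attains at least `q` at `VaR q` (right-continuity of the CDF). -/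
lemma cdf_var_ge [IsProbabilityMeasure P] (hZ : Measurable Z) (hM : ∀ ω, |Z ω| ≤ M)
    (hq0 : 0 < q) (hq1 : q ≤ 1) :
    q ≤ (P {ω | Z ω ≤ VaR P Z q}).toReal := by
  set a := VaR P Z q with ha
  set s : ℕ → Set Ω := fun n => {ω | Z ω ≤ a + ((n : ℝ) + 1)⁻¹} with hs
  have hsm : ∀ n, NullMeasurableSet (s n) P := fun n =>
    (hZ measurableSet_Iic).nullMeasurableSet
  have hanti : Antitone s := by
    intro m n hmn ω hω
    refine le_trans hω (add_le_add_right ?_ a)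
    exact inv_anti₀ (by positivity) (by exact_mod_cast add_le_add_left (Nat.cast_le.2 hmn) 1)
  have hiInter : ⋂ n, s n = {ω | Z ω ≤ a} := by
    ext ω
    simp only [mem_iInter, hs, mem_setOf_eq]
    constructor
    · intro h
      by_contra hc
      push_neg at hc
      obtain ⟨n, hn⟩ := exists_nat_one_div_lt (sub_pos.2 hc)
      have := h n
      rw [one_div] at hn
      linarith
    · intro h n
      have : (0:ℝ) < ((n : ℝ) + 1)⁻¹ := by positivity
      linarith
  have htend := tendsto_measure_iInter_atTop hsm hanti ⟨0, measure_ne_top _ _⟩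
  rw [hiInter] at htend
  have hbound : ∀ n, ENNReal.ofReal q ≤ P (s n) := by
    intro n
    have hlt : a < a + ((n : ℝ) + 1)⁻¹ := by
      have : (0:ℝ) < ((n : ℝ) + 1)⁻¹ := by positivity
      linarith
    obtain ⟨y, hy, hy'⟩ := exists_lt_of_csInf_lt
      ⟨M, var_mem_M hM hq1⟩ (show VaR P Z q < a + ((n : ℝ) + 1)⁻¹ from hlt)
    have : q ≤ (P (s n)).toReal :=
      le_trans hy (cdf_mono P Z (le_of_lt hy'))
    exact ENNReal.ofReal_le_of_le_toReal this
  have hle : ENNReal.ofReal q ≤ P {ω | Z ω ≤ a} :=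
    ge_of_tendsto' htend hbound
  calc q ≤ (ENNReal.ofReal q).toReal := by rw [ENNReal.toReal_ofReal hq0.le]
  _ ≤ (P {ω | Z ω ≤ a}).toReal := ENNReal.toReal_mono (measure_ne_top _ _) hle

/-- Galois connection characterizing `VaR`. -/
lemma var_le_iff [IsProbabilityMeasure P] (hZ : Measurable Z) (hM : ∀ ω, |Z ω| ≤ M)
    (hq0 : 0 < q) (hq1 : q ≤ 1) :
    VaR P Z q ≤ x ↔ q ≤ (P {ω | Z ω ≤ x}).toReal := by
  constructor
  · intro h
    exact le_trans (cdf_var_ge hZ hM hq0 hq1) (cdf_mono P Z h)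
  · intro h
    exact csInf_le (var_bddBelow hM hq0) h

lemma var_le_M [IsProbabilityMeasure P] (hZ : Measurable Z) (hM : ∀ ω, |Z ω| ≤ M)
    (hq0 : 0 < q) (hq1 : q ≤ 1) : VaR P Z q ≤ M :=
  (var_le_iff hZ hM hq0 hq1).2 (by rw [cdf_top hM]; exact hq1)

lemma neg_M_le_var [IsProbabilityMeasure P] (hZ : Measurable Z) (hM : ∀ ω, |Z ω| ≤ M)
    (hq0 : 0 < q) (hq1 : q ≤ 1) : -M ≤ VaR P Z q := by
  by_contra hc
  push_neg at hc
  have := (var_le_iff hZ hM hq0 hq1).1 (le_refl (VaR P Z q))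
  rw [cdf_bot hM hc] at this
  exact absurd (lt_of_lt_of_le hq0 this) (lt_irrefl 0)

lemma var_abs_le [IsProbabilityMeasure P] (hZ : Measurable Z) (hM : ∀ ω, |Z ω| ≤ M)
    (hq0 : 0 < q) (hq1 : q ≤ 1) : |VaR P Z q| ≤ M :=
  abs_le.2 ⟨neg_M_le_var hZ hM hq0 hq1, var_le_M hZ hM hq0 hq1⟩

lemma var_mono_q [IsProbabilityMeasure P] (hZ : Measurable Z) (hM : ∀ ω, |Z ω| ≤ M)
    (hq0 : 0 < q) {q' : ℝ} (hqq' : q ≤ q') (hq1 : q' ≤ 1) : VaR P Z q ≤ VaR P Z q' :=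
  (var_le_iff hZ hM hq0 (hqq'.trans hq1)).2
    (le_trans hqq' (cdf_var_ge hZ hM (hq0.trans_le hqq') hq1))








-- two reals are equal if they have the same upper sets
lemma eq_of_forall_le_iff' {a b : ℝ} (h : ∀ x, a ≤ x ↔ b ≤ x) : a = b :=
  le_antisymm ((h b).2 le_rfl) ((h a).1 le_rfl)

lemma var_translate [IsProbabilityMeasure P] (hZ : Measurable Z) (hM : ∀ ω, |Z ω| ≤ M)
    (hq0 : 0 < q) (hq1 : q ≤ 1) (c : ℝ) :
    VaR P (fun ω => Z ω + c) q = VaR P Z q + c := by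
  have hM' : ∀ ω, |Z ω + c| ≤ M + |c| := fun ω =>
    (abs_add_le _ _).trans (add_le_add (hM ω) le_rfl)
  refine eq_of_forall_le_iff' fun x => ?_
  rw [var_le_iff (P := P) (hZ.add_const c) hM' hq0 hq1]
  have hset : {ω | Z ω + c ≤ x} = {ω | Z ω ≤ x - c} := by
    ext ω; simp only [mem_setOf_eq]; constructor <;> intro <;> linarith
  rw [hset, ← var_le_iff (P := P) hZ hM hq0 hq1]
  constructor <;> intro <;> linarith

lemma var_smul [IsProbabilityMeasure P] (hZ : Measurable Z) (hM : ∀ ω, |Z ω| ≤ M)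
    (hq0 : 0 < q) (hq1 : q ≤ 1) {l : ℝ} (hl : 0 < l) :
    VaR P (fun ω => l * Z ω) q = l * VaR P Z q := by
  have hM' : ∀ ω, |l * Z ω| ≤ l * M := fun ω => by
    rw [abs_mul, abs_of_pos hl]
    exact mul_le_mul_of_nonneg_left (hM ω) hl.le
  refine eq_of_forall_le_iff' fun x => ?_
  rw [var_le_iff (P := P) (hZ.const_mul l) hM' hq0 hq1]
  have hset : {ω | l * Z ω ≤ x} = {ω | Z ω ≤ x / l} := by
    ext ω; simp only [mem_setOf_eq]; rw [le_div_iff₀ hl, mul_comm]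
  rw [hset, ← var_le_iff (P := P) hZ hM hq0 hq1, mul_comm, ← le_div_iff₀ hl]

lemma var_mono_Z [IsProbabilityMeasure P] (hU : Measurable U) (hV : Measurable V)
    (hMU : ∀ ω, |U ω| ≤ M) (hMV : ∀ ω, |V ω| ≤ N)
    (hq0 : 0 < q) (hq1 : q ≤ 1) (h : ∀ ω, U ω ≤ V ω) :
    VaR P U q ≤ VaR P V q := by
  rw [var_le_iff (P := P) hU hMU hq0 hq1]
  refine le_trans (cdf_var_ge (P := P) hV hMV hq0 hq1) ?_
  exact ENNReal.toReal_mono (measure_ne_top _ _)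
    (measure_mono fun ω (hω : V ω ≤ VaR P V q) => (h ω).trans hω)

/-- Sublevel sets of comonotonic functions are nested. -/
lemma comono_nested (h : Comonotonic U V) (a b : ℝ) :
    {ω | U ω ≤ a} ⊆ {ω | V ω ≤ b} ∨ {ω | V ω ≤ b} ⊆ {ω | U ω ≤ a} := by
  by_contra hc
  push_neg at hc
  obtain ⟨ω, hω1, hω2⟩ := not_subset.1 hc.1
  obtain ⟨ω', hω'1, hω'2⟩ := not_subset.1 hc.2
  simp only [mem_setOf_eq, not_le] at hω1 hω2 hω'1 hω'2
  have := h ω ω'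
  nlinarith

lemma comono_add_left (h : Comonotonic U V) : Comonotonic (fun ω => U ω + V ω) U := by
  intro ω ω'
  have := h ω ω'
  dsimp only
  nlinarith [sq_nonneg (U ω - U ω'), sq_nonneg (V ω - V ω')]

lemma comono_add_right (h : Comonotonic U V) : Comonotonic (fun ω => U ω + V ω) V := by
  intro ω ω'
  have := h ω ω'
  dsimp only
  nlinarith [sq_nonneg (U ω - U ω'), sq_nonneg (V ω - V ω')]

lemma var_comono_add [IsProbabilityMeasure P] (hU : Measurable U) (hV : Measurable V)
    (hMU : ∀ ω, |U ω| ≤ M) (hMV : ∀ ω, |V ω| ≤ N)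
    (hq0 : 0 < q) (hq1 : q ≤ 1) (h : Comonotonic U V) :
    VaR P (fun ω => U ω + V ω) q = VaR P U q + VaR P V q := by
  set a := VaR P U q with ha
  set b := VaR P V q with hb
  have hW : Measurable (fun ω => U ω + V ω) := hU.add hV
  have hMW : ∀ ω, |U ω + V ω| ≤ M + N := fun ω =>
    (abs_add_le _ _).trans (add_le_add (hMU ω) (hMV ω))
  refine le_antisymm ?_ ?_
  · -- VaR (U+V) ≤ a + b
    rw [var_le_iff (P := P) hW hMW hq0 hq1]
    have hsub : {ω | U ω ≤ a} ∩ {ω | V ω ≤ b} ⊆ {ω | U ω + V ω ≤ a + b} := by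
      rintro ω ⟨h1, h2⟩
      show U ω + V ω ≤ a + b
      exact add_le_add h1 h2
    have hq' : ∃ s, s ⊆ {ω | U ω + V ω ≤ a + b} ∧ q ≤ (P s).toReal := by
      rcases comono_nested h a b with hn | hn
      · exact ⟨{ω | U ω ≤ a}, fun ω hω => hsub ⟨hω, hn hω⟩, cdf_var_ge (P := P) hU hMU hq0 hq1⟩
      · exact ⟨{ω | V ω ≤ b}, fun ω hω => hsub ⟨hn hω, hω⟩, cdf_var_ge (P := P) hV hMV hq0 hq1⟩
    obtain ⟨s, hs, hqs⟩ := hq'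
    exact hqs.trans (ENNReal.toReal_mono (measure_ne_top _ _) (measure_mono hs))
  · -- a + b ≤ VaR (U+V)
    by_contra hc
    push_neg at hc
    set x := VaR P (fun ω => U ω + V ω) q with hx
    set ε := (a + b - x) / 2 with hε
    have hε0 : 0 < ε := by simp only [hε]; linarith
    have hx1 : x ≤ x := le_refl x
    have hFx : q ≤ (P {ω | U ω + V ω ≤ x}).toReal := (var_le_iff (P := P) hW hMW hq0 hq1).1 hx1
    have hFa : (P {ω | U ω ≤ a - ε}).toReal < q := by
      by_contra hc2
      push_neg at hc2
      have := (var_le_iff (P := P) hU hMU hq0 hq1).2 hc2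
      simp only [← ha] at this
      linarith
    have hFb : (P {ω | V ω ≤ b - ε}).toReal < q := by
      by_contra hc2
      push_neg at hc2
      have := (var_le_iff (P := P) hV hMV hq0 hq1).2 hc2
      simp only [← hb] at this
      linarith
    have hsub : {ω | U ω + V ω ≤ x} ⊆ {ω | U ω ≤ a - ε} ∪ {ω | V ω ≤ b - ε} := by
      intro ω hω
      simp only [mem_setOf_eq] at hω
      by_contra hc2
      simp only [mem_union, mem_setOf_eq, not_or, not_le] at hc2
      have : a - ε + (b - ε) < U ω + V ω := add_lt_add hc2.1 hc2.2
      have hxeq : a - ε + (b - ε) = x := by simp only [hε]; ring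
      linarith
    have hcases : ∃ s, {ω | U ω + V ω ≤ x} ⊆ s ∧ (P s).toReal < q := by
      rcases comono_nested h (a - ε) (b - ε) with hn | hn
      · exact ⟨{ω | V ω ≤ b - ε}, fun ω hω => (hsub hω).elim (fun h' => hn h') id, hFb⟩
      · exact ⟨{ω | U ω ≤ a - ε}, fun ω hω => (hsub hω).elim id (fun h' => hn h'), hFa⟩
    obtain ⟨s, hs, hqs⟩ := hcases
    have := hFx.trans (ENNReal.toReal_mono (measure_ne_top _ _) (measure_mono hs))
    linarith














/-! ### Integrability -/

lemma M_nonneg [IsProbabilityMeasure P] (hM : ∀ ω, |Z ω| ≤ M) : 0 ≤ M := by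
  have hne : Nonempty Ω := by
    rcases isEmpty_or_nonempty Ω with h | h
    · exfalso
      have h1 : P univ = 1 := measure_univ
      simp [Set.univ_eq_empty_iff.2 h] at h1
    · exact h
  obtain ⟨ω⟩ := hne
  exact le_trans (abs_nonneg _) (hM ω)

instance finite_restrict_Ioc : IsFiniteMeasure (volume.restrict (Ioc p 1)) := by
  constructor
  rw [Measure.restrict_apply_univ, Real.volume_Ioc]
  exact ENNReal.ofReal_lt_top

lemma integrable_of_monoOn {f : ℝ → ℝ} {C : ℝ} (hmono : MonotoneOn f (Ioc p 1))
    (hC : ∀ q ∈ Ioc p 1, |f q| ≤ C) : IntegrableOn f (Ioc p 1) volume := by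
  refine ⟨(aemeasurable_restrict_of_monotoneOn measurableSet_Ioc hmono).aestronglyMeasurable, ?_⟩
  refine HasFiniteIntegral.of_bounded (C := C) ?_
  rw [ae_restrict_iff' measurableSet_Ioc]
  exact ae_of_all _ fun q hq => by rw [Real.norm_eq_abs]; exact hC q hq

lemma var_monoOn [IsProbabilityMeasure P] (hZ : Measurable Z) (hM : ∀ ω, |Z ω| ≤ M)
    (hp0 : 0 < p) : MonotoneOn (fun q => VaR P Z q) (Ioc p 1) :=
  fun q hq q' hq' hqq' => var_mono_q (P := P) hZ hM (lt_of_lt_of_le hp0 hq.1.le) hqq' hq'.2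

lemma integrable_var [IsProbabilityMeasure P] (hZ : Measurable Z) (hM : ∀ ω, |Z ω| ≤ M)
    (hp0 : 0 < p) : IntegrableOn (fun q => VaR P Z q) (Ioc p 1) volume :=
  integrable_of_monoOn (var_monoOn (P := P) hZ hM hp0)
    (fun q hq => var_abs_le (P := P) hZ hM (lt_of_lt_of_le hp0 hq.1.le) hq.2)

lemma intervalIntegrable_var [IsProbabilityMeasure P] (hZ : Measurable Z)
    (hM : ∀ ω, |Z ω| ≤ M) (hp : p ∈ Ioo (0:ℝ) 1) :
    IntervalIntegrable (fun q => VaR P Z q) volume p 1 :=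
  (intervalIntegrable_iff_integrableOn_Ioc_of_le hp.2.le).2 (integrable_var (P := P) hZ hM hp.1)

lemma integrable_bdd [IsProbabilityMeasure P] (hZ : Measurable Z) (hM : ∀ ω, |Z ω| ≤ M) :
    Integrable Z P :=
  ⟨hZ.aestronglyMeasurable,
   HasFiniteIntegral.of_bounded (C := M) (ae_of_all _ fun ω => by
     rw [Real.norm_eq_abs]; exact hM ω)⟩

/-! ### Layer cake computations -/

lemma max_sub_monoOn [IsProbabilityMeasure P] (hZ : Measurable Z) (hM : ∀ ω, |Z ω| ≤ M)
    (hp0 : 0 < p) (z : ℝ) : MonotoneOn (fun q => max (VaR P Z q - z) 0) (Ioc p 1) :=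
  fun q hq q' hq' hqq' =>
    max_le_max (sub_le_sub_right (var_monoOn (P := P) hZ hM hp0 hq hq' hqq') z) le_rfl

lemma max_sub_abs_le {y z C : ℝ} (hy : |y| ≤ C) : |max (y - z) 0| ≤ C + |z| := by
  have h0 : 0 ≤ C := le_trans (abs_nonneg _) hy
  rw [abs_le] at hy ⊢
  constructor
  · have := le_max_right (y - z) 0
    have := abs_nonneg z
    linarith
  · refine max_le ?_ (by have := abs_nonneg z; linarith)
    have := neg_le_abs z
    linarith



lemma lc_var [IsProbabilityMeasure P] (hZ : Measurable Z) (hM : ∀ ω, |Z ω| ≤ M)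
    (hp : p ∈ Ioo (0:ℝ) 1) (z : ℝ) :
    ∫⁻ q in Ioc p 1, ENNReal.ofReal (max (VaR P Z q - z) 0) =
      ∫⁻ t in Ioi (0:ℝ),
        ENNReal.ofReal (1 - max p ((P {ω | Z ω ≤ z + t}).toReal)) := by
  have hmono := max_sub_monoOn (P := P) hZ hM hp.1 z
  have haem : AEMeasurable (fun q => max (VaR P Z q - z) 0) (volume.restrict (Ioc p 1)) :=
    aemeasurable_restrict_of_monotoneOn measurableSet_Ioc hmono
  have hlc := lintegral_eq_lintegral_meas_lt (volume.restrict (Ioc p 1))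
    (f := fun q => max (VaR P Z q - z) 0) (ae_of_all _ fun q => le_max_right _ _) haem
  rw [hlc]
  refine setLIntegral_congr_fun measurableSet_Ioi (fun t ht => ?_)
  rw [Measure.restrict_apply' measurableSet_Ioc]
  have hset : {q | t < max (VaR P Z q - z) 0} ∩ Ioc p 1 =
      Ioc (max p ((P {ω | Z ω ≤ z + t}).toReal)) 1 := by
    ext q
    simp only [mem_inter_iff, mem_setOf_eq, mem_Ioc, lt_max_iff, max_lt_iff]
    constructor
    · rintro ⟨ht', hpq, hq1⟩
      rcases ht' with h' | h'
      · refine ⟨⟨hpq, ?_⟩, hq1⟩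
        by_contra hc
        push_neg at hc
        have := (var_le_iff (P := P) (Z := Z) hZ hM (lt_trans hp.1 hpq) hq1).2 hc
        linarith
      · exact absurd ht h'.asymm
    · rintro ⟨⟨hpq, hFq⟩, hq1⟩
      refine ⟨Or.inl ?_, hpq, hq1⟩
      have : ¬ VaR P Z q ≤ z + t := by
        rw [var_le_iff (P := P) (Z := Z) hZ hM (lt_trans hp.1 hpq) hq1]
        exact not_le.2 hFq
      push_neg at this
      linarith
  rw [hset, Real.volume_Ioc]

lemma lc_Z [IsProbabilityMeasure P] (hZ : Measurable Z) (z : ℝ) :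
    ∫⁻ ω, ENNReal.ofReal (max (Z ω - z) 0) ∂P =
      ∫⁻ t in Ioi (0:ℝ), P {ω | z + t < Z ω} := by
  have hlc := lintegral_eq_lintegral_meas_lt P (f := fun ω => max (Z ω - z) 0)
    (ae_of_all _ fun ω => le_max_right _ _)
    ((hZ.sub measurable_const).max measurable_const).aemeasurable
  rw [hlc]
  refine setLIntegral_congr_fun measurableSet_Ioi (fun t ht => ?_)
  congr 1
  ext ω
  simp only [mem_setOf_eq, lt_max_iff]
  constructor
  · rintro (h | h)
    · linarith
    · exact absurd ht h.asymm
  · intro h; exact Or.inl (by linarith)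

lemma prob_compl_eq [IsProbabilityMeasure P] (hZ : Measurable Z) (x : ℝ) :
    ENNReal.ofReal (1 - (P {ω | Z ω ≤ x}).toReal) = P {ω | x < Z ω} := by
  have hms : MeasurableSet {ω | Z ω ≤ x} := hZ measurableSet_Iic
  have hc : {ω | x < Z ω} = {ω | Z ω ≤ x}ᶜ := by ext ω; simp [not_le]
  have hle : P {ω | Z ω ≤ x} ≤ 1 := prob_le_one
  rw [hc, measure_compl hms (measure_ne_top _ _), measure_univ]
  rw [show (1:ℝ) = (1:ℝ≥0∞).toReal from ENNReal.toReal_one.symm]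
  rw [← ENNReal.toReal_sub_of_le hle ENNReal.one_ne_top]
  exact ENNReal.ofReal_toReal (ne_of_lt (lt_of_le_of_lt tsub_le_self ENNReal.one_lt_top))

lemma lint_le [IsProbabilityMeasure P] (hZ : Measurable Z) (hM : ∀ ω, |Z ω| ≤ M)
    (hp : p ∈ Ioo (0:ℝ) 1) (z : ℝ) :
    ∫⁻ q in Ioc p 1, ENNReal.ofReal (max (VaR P Z q - z) 0) ≤
      ∫⁻ ω, ENNReal.ofReal (max (Z ω - z) 0) ∂P := by
  rw [lc_var (P := P) hZ hM hp z, lc_Z (P := P) hZ z]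
  refine lintegral_mono fun t => ?_
  rw [← prob_compl_eq (P := P) hZ (z + t)]
  refine ENNReal.ofReal_le_ofReal ?_
  have := le_max_right p ((P {ω | Z ω ≤ z + t}).toReal)
  linarith

lemma lint_eq [IsProbabilityMeasure P] (hZ : Measurable Z) (hM : ∀ ω, |Z ω| ≤ M)
    (hp : p ∈ Ioo (0:ℝ) 1) (z : ℝ)
    (hz : ∀ t, 0 < t → p ≤ (P {ω | Z ω ≤ z + t}).toReal) :
    ∫⁻ q in Ioc p 1, ENNReal.ofReal (max (VaR P Z q - z) 0) =
      ∫⁻ ω, ENNReal.ofReal (max (Z ω - z) 0) ∂P := by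
  rw [lc_var (P := P) hZ hM hp z, lc_Z (P := P) hZ z]
  refine setLIntegral_congr_fun measurableSet_Ioi (fun t ht => ?_)
  rw [max_eq_right (hz t ht), prob_compl_eq (P := P) hZ (z + t)]

lemma lint_Z_ne_top [IsProbabilityMeasure P] (hZ : Measurable Z) (hM : ∀ ω, |Z ω| ≤ M)
    (z : ℝ) : ∫⁻ ω, ENNReal.ofReal (max (Z ω - z) 0) ∂P ≠ ⊤ := by
  have hb : ∀ ω, ENNReal.ofReal (max (Z ω - z) 0) ≤ ENNReal.ofReal (M + |z|) := by
    intro ω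
    refine ENNReal.ofReal_le_ofReal (max_le ?_ ?_)
    · have h1 : Z ω ≤ M := (abs_le.1 (hM ω)).2
      have h2 : -z ≤ |z| := neg_le_abs z
      linarith
    · have := M_nonneg (P := P) hM
      positivity
  refine ne_of_lt (lt_of_le_of_lt (lintegral_mono hb) ?_)
  rw [lintegral_const, measure_univ, mul_one]
  exact ENNReal.ofReal_lt_top

lemma integral_max_eq_toReal [IsProbabilityMeasure P] (hZ : Measurable Z) (z : ℝ) :
    ∫ ω, max (Z ω - z) 0 ∂P = (∫⁻ ω, ENNReal.ofReal (max (Z ω - z) 0) ∂P).toReal :=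
  integral_eq_lintegral_of_nonneg_ae (f := fun ω => max (Z ω - z) 0)
    (ae_of_all _ fun ω => le_max_right _ _)
    ((hZ.sub measurable_const).max measurable_const).aestronglyMeasurable

lemma integral_var_max_eq_toReal [IsProbabilityMeasure P] (hZ : Measurable Z)
    (hM : ∀ ω, |Z ω| ≤ M) (hp : p ∈ Ioo (0:ℝ) 1) (z : ℝ) :
    ∫ q in Ioc p 1, max (VaR P Z q - z) 0 =
      (∫⁻ q in Ioc p 1, ENNReal.ofReal (max (VaR P Z q - z) 0)).toReal := by
  have hmono := max_sub_monoOn (P := P) hZ hM hp.1 z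
  exact integral_eq_lintegral_of_nonneg_ae (f := fun q => max (VaR P Z q - z) 0)
    (ae_of_all _ fun q => le_max_right _ _)
    (aemeasurable_restrict_of_monotoneOn measurableSet_Ioc hmono).aestronglyMeasurable

/-! ### ES representation lemmas -/

lemma integrable_var_max [IsProbabilityMeasure P] (hZ : Measurable Z)
    (hM : ∀ ω, |Z ω| ≤ M) (hp : p ∈ Ioo (0:ℝ) 1) (z : ℝ) :
    IntegrableOn (fun q => max (VaR P Z q - z) 0) (Ioc p 1) volume := by
  refine integrable_of_monoOn (max_sub_monoOn (P := P) hZ hM hp.1 z) (C := M + |z|) (fun q hq => ?_)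
  exact max_sub_abs_le (var_abs_le (P := P) hZ hM (lt_of_lt_of_le hp.1 hq.1.le) hq.2)

lemma es_le_of_repr [IsProbabilityMeasure P] (hZ : Measurable Z) (hM : ∀ ω, |Z ω| ≤ M)
    (hp : p ∈ Ioo (0:ℝ) 1) (z : ℝ) :
    ES P Z p ≤ z + (1 - p)⁻¹ * ∫ ω, max (Z ω - z) 0 ∂P := by
  have h1p : (0:ℝ) < 1 - p := by linarith [hp.2]
  rw [ES, intervalIntegral.integral_of_le hp.2.le]
  have key : ∫ q in Ioc p 1, VaR P Z q ≤ z * (1 - p) + ∫ ω, max (Z ω - z) 0 ∂P := by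
    have step1 : ∫ q in Ioc p 1, VaR P Z q ≤
        ∫ q in Ioc p 1, (z + max (VaR P Z q - z) 0) := by
      refine setIntegral_mono_on (integrable_var (P := P) hZ hM hp.1)
        ((integrable_const z).add (integrable_var_max (P := P) hZ hM hp z)) measurableSet_Ioc
        (fun q _ => ?_)
      have := le_max_left (VaR P Z q - z) 0
      linarith
    have step2 : ∫ q in Ioc p 1, (z + max (VaR P Z q - z) 0) =
        z * (1 - p) + ∫ q in Ioc p 1, max (VaR P Z q - z) 0 := by
      rw [integral_add (integrable_const z) (integrable_var_max (P := P) hZ hM hp z)]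
      congr 1
      rw [setIntegral_const, Measure.real, Real.volume_Ioc, ENNReal.toReal_ofReal (by linarith [hp.2]),
        smul_eq_mul, mul_comm]
    have step3 : ∫ q in Ioc p 1, max (VaR P Z q - z) 0 ≤ ∫ ω, max (Z ω - z) 0 ∂P := by
      rw [integral_var_max_eq_toReal (P := P) hZ hM hp z, integral_max_eq_toReal (P := P) hZ z]
      exact ENNReal.toReal_mono (lint_Z_ne_top (P := P) hZ hM z) (lint_le (P := P) hZ hM hp z)
    linarith
  calc (1 - p)⁻¹ * ∫ q in Ioc p 1, VaR P Z q
      ≤ (1 - p)⁻¹ * (z * (1 - p) + ∫ ω, max (Z ω - z) 0 ∂P) :=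
        mul_le_mul_of_nonneg_left key (by positivity)
    _ = z + (1 - p)⁻¹ * ∫ ω, max (Z ω - z) 0 ∂P := by
        field_simp

lemma es_repr [IsProbabilityMeasure P] (hZ : Measurable Z) (hM : ∀ ω, |Z ω| ≤ M)
    (hp : p ∈ Ioo (0:ℝ) 1) :
    ES P Z p = VaR P Z p + (1 - p)⁻¹ * ∫ ω, max (Z ω - VaR P Z p) 0 ∂P := by
  have h1p : (0:ℝ) < 1 - p := by linarith [hp.2]
  set z := VaR P Z p with hz
  rw [ES, intervalIntegral.integral_of_le hp.2.le]
  have key : ∫ q in Ioc p 1, VaR P Z q = z * (1 - p) + ∫ ω, max (Z ω - z) 0 ∂P := by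
    have step1 : ∫ q in Ioc p 1, VaR P Z q =
        ∫ q in Ioc p 1, (z + max (VaR P Z q - z) 0) := by
      refine setIntegral_congr_fun measurableSet_Ioc (fun q hq => ?_)
      have hle : z ≤ VaR P Z q := var_mono_q (P := P) hZ hM hp.1 hq.1.le hq.2
      rw [max_eq_left (by linarith)]
      ring
    have step2 : ∫ q in Ioc p 1, (z + max (VaR P Z q - z) 0) =
        z * (1 - p) + ∫ q in Ioc p 1, max (VaR P Z q - z) 0 := by
      rw [integral_add (integrable_const z) (integrable_var_max (P := P) hZ hM hp z)]
      congr 1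
      rw [setIntegral_const, Measure.real, Real.volume_Ioc, ENNReal.toReal_ofReal (by linarith [hp.2]),
        smul_eq_mul, mul_comm]
    have step3 : ∫ q in Ioc p 1, max (VaR P Z q - z) 0 = ∫ ω, max (Z ω - z) 0 ∂P := by
      rw [integral_var_max_eq_toReal (P := P) hZ hM hp z, integral_max_eq_toReal (P := P) hZ z]
      congr 1
      refine lint_eq (P := P) hZ hM hp z (fun t ht => ?_)
      refine le_trans (cdf_var_ge (P := P) hZ hM hp.1 hp.2.le) ?_
      exact cdf_mono P Z (by linarith)
    rw [step1, step2, step3]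
  rw [key]
  field_simp

lemma es_subadd [IsProbabilityMeasure P] (hU : Measurable U) (hV : Measurable V)
    (hMU : ∀ ω, |U ω| ≤ M) (hMV : ∀ ω, |V ω| ≤ N) (hp : p ∈ Ioo (0:ℝ) 1) :
    ES P (fun ω => U ω + V ω) p ≤ ES P U p + ES P V p := by
  have h1p : (0:ℝ) < 1 - p := by linarith [hp.2]
  set a := VaR P U p with ha
  set b := VaR P V p with hb
  have hW : Measurable (fun ω => U ω + V ω) := hU.add hV
  have hMW : ∀ ω, |U ω + V ω| ≤ M + N := fun ω =>
    (abs_add_le _ _).trans (add_le_add (hMU ω) (hMV ω))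
  have h1 := es_le_of_repr (P := P) hW hMW hp (a + b)
  have h2 := es_repr (P := P) hU hMU hp
  have h3 := es_repr (P := P) hV hMV hp
  have hint : ∫ ω, max (U ω + V ω - (a + b)) 0 ∂P ≤
      (∫ ω, max (U ω - a) 0 ∂P) + ∫ ω, max (V ω - b) 0 ∂P := by
    have hiU : Integrable (fun ω => max (U ω - a) 0) P :=
      integrable_bdd (P := P) ((hU.sub measurable_const).max measurable_const)
        (M := M + |a|) (fun ω => max_sub_abs_le (hMU ω))
    have hiV : Integrable (fun ω => max (V ω - b) 0) P :=
      integrable_bdd (P := P) ((hV.sub measurable_const).max measurable_const)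
        (M := N + |b|) (fun ω => max_sub_abs_le (hMV ω))
    have hiW : Integrable (fun ω => max (U ω + V ω - (a + b)) 0) P :=
      integrable_bdd (P := P) ((hW.sub measurable_const).max measurable_const)
        (M := (M + N) + |a + b|) (fun ω => max_sub_abs_le (hMW ω))
    rw [← integral_add hiU hiV]
    refine integral_mono hiW (hiU.add hiV) (fun ω => ?_)
    refine max_le ?_ ?_
    · have := le_max_left (U ω - a) 0
      have := le_max_left (V ω - b) 0
      linarith
    · have := le_max_right (U ω - a) 0
      have := le_max_right (V ω - b) 0
      linarith
  have hmul : (1 - p)⁻¹ * ∫ ω, max (U ω + V ω - (a + b)) 0 ∂P ≤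
      (1 - p)⁻¹ * ((∫ ω, max (U ω - a) 0 ∂P) + ∫ ω, max (V ω - b) 0 ∂P) :=
    mul_le_mul_of_nonneg_left hint (by positivity)
  rw [mul_add] at hmul
  linarith
















/-! ### ES-level coherence lemmas -/

lemma mem_uIcc_pos {p q : ℝ} (hp : p ∈ Ioo (0:ℝ) 1) (hq : q ∈ uIcc p 1) :
    0 < q ∧ q ≤ 1 := by
  rw [uIcc_of_le hp.2.le] at hq
  exact ⟨lt_of_lt_of_le hp.1 hq.1, hq.2⟩

lemma es_translate [IsProbabilityMeasure P] (hZ : Measurable Z) (hM : ∀ ω, |Z ω| ≤ M)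
    (hp : p ∈ Ioo (0:ℝ) 1) (c : ℝ) :
    ES P (fun ω => Z ω + c) p = ES P Z p + c := by
  have h1p : (0:ℝ) < 1 - p := by linarith [hp.2]
  rw [ES, ES]
  have hcong : ∫ q in p..1, VaR P (fun ω => Z ω + c) q = ∫ q in p..1, (VaR P Z q + c) :=
    intervalIntegral.integral_congr fun q hq => by
      obtain ⟨hq0, hq1⟩ := mem_uIcc_pos hp hq
      exact var_translate hZ hM hq0 hq1 c
  rw [hcong, intervalIntegral.integral_add (intervalIntegrable_var (P := P) hZ hM hp)
    intervalIntegrable_const, intervalIntegral.integral_const, mul_add, smul_eq_mul,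
    inv_mul_cancel_left₀ (ne_of_gt h1p)]

lemma es_smul [IsProbabilityMeasure P] (hZ : Measurable Z) (hM : ∀ ω, |Z ω| ≤ M)
    (hp : p ∈ Ioo (0:ℝ) 1) {l : ℝ} (hl : 0 < l) :
    ES P (fun ω => l * Z ω) p = l * ES P Z p := by
  rw [ES, ES]
  have hcong : ∫ q in p..1, VaR P (fun ω => l * Z ω) q = ∫ q in p..1, l * VaR P Z q :=
    intervalIntegral.integral_congr fun q hq => by
      obtain ⟨hq0, hq1⟩ := mem_uIcc_pos hp hq
      exact var_smul hZ hM hq0 hq1 hl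
  rw [hcong, intervalIntegral.integral_const_mul]
  ring

lemma es_mono [IsProbabilityMeasure P] (hU : Measurable U) (hV : Measurable V)
    (hMU : ∀ ω, |U ω| ≤ M) (hMV : ∀ ω, |V ω| ≤ N)
    (hp : p ∈ Ioo (0:ℝ) 1) (h : ∀ ω, U ω ≤ V ω) :
    ES P U p ≤ ES P V p := by
  have h1p : (0:ℝ) < 1 - p := by linarith [hp.2]
  rw [ES, ES]
  refine mul_le_mul_of_nonneg_left ?_ (by positivity)
  refine intervalIntegral.integral_mono_on hp.2.le (intervalIntegrable_var (P := P) hU hMU hp)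
    (intervalIntegrable_var (P := P) hV hMV hp) (fun q hq => ?_)
  exact var_mono_Z hU hV hMU hMV (lt_of_lt_of_le hp.1 hq.1) hq.2 h

lemma es_comono_add [IsProbabilityMeasure P] (hU : Measurable U) (hV : Measurable V)
    (hMU : ∀ ω, |U ω| ≤ M) (hMV : ∀ ω, |V ω| ≤ N)
    (hp : p ∈ Ioo (0:ℝ) 1) (h : Comonotonic U V) :
    ES P (fun ω => U ω + V ω) p = ES P U p + ES P V p := by
  rw [ES, ES, ES]
  have hcong : ∫ q in p..1, VaR P (fun ω => U ω + V ω) q =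
      ∫ q in p..1, (VaR P U q + VaR P V q) :=
    intervalIntegral.integral_congr fun q hq => by
      obtain ⟨hq0, hq1⟩ := mem_uIcc_pos hp hq
      exact var_comono_add hU hV hMU hMV hq0 hq1 h
  rw [hcong, intervalIntegral.integral_add (intervalIntegrable_var (P := P) hU hMU hp)
    (intervalIntegrable_var (P := P) hV hMV hp), mul_add]

/-! ### Finite suprema -/

lemma exists_sup_eq {n : ℕ} (hn : 0 < n) (g : Fin n → ℝ) :
    ∃ i, (⨆ j, g j) = g i ∧ ∀ j, g j ≤ g i := by
  haveI : Nonempty (Fin n) := ⟨⟨0, hn⟩⟩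
  obtain ⟨i, hi⟩ := Finite.exists_max g
  exact ⟨i, le_antisymm (ciSup_le hi) (le_ciSup (Set.finite_range g).bddAbove i), hi⟩

lemma sup_abs_le {n : ℕ} (hn : 0 < n) (g : Fin n → ℝ) {M : ℝ} (hM : ∀ j, |g j| ≤ M) :
    |⨆ j, g j| ≤ M := by
  obtain ⟨i, hi, _⟩ := exists_sup_eq hn g
  rw [hi]; exact hM i

lemma sup_add_const {n : ℕ} (hn : 0 < n) (g : Fin n → ℝ) (c : ℝ) :
    ⨆ j, (g j + c) = (⨆ j, g j) + c := by
  obtain ⟨i, hi, hle⟩ := exists_sup_eq hn g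
  obtain ⟨i', hi', hle'⟩ := exists_sup_eq hn (fun j => g j + c)
  rw [hi, hi']
  exact le_antisymm (add_le_add_left (hle i') c) (hle' i)

lemma sup_const_mul {n : ℕ} (hn : 0 < n) (g : Fin n → ℝ) {l : ℝ} (hl : 0 < l) :
    ⨆ j, l * g j = l * ⨆ j, g j := by
  obtain ⟨i, hi, hle⟩ := exists_sup_eq hn g
  obtain ⟨i', hi', hle'⟩ := exists_sup_eq hn (fun j => l * g j)
  rw [hi, hi']
  exact le_antisymm (mul_le_mul_of_nonneg_left (hle i') hl.le) (hle' i)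

lemma sup_mono {n : ℕ} (hn : 0 < n) (g h : Fin n → ℝ) (hgh : ∀ j, g j ≤ h j) :
    (⨆ j, g j) ≤ ⨆ j, h j := by
  obtain ⟨i, hi, _⟩ := exists_sup_eq hn g
  obtain ⟨i', hi', hle'⟩ := exists_sup_eq hn h
  rw [hi, hi']
  exact le_trans (hgh i) (hle' i)

lemma sup_add_le {n : ℕ} (hn : 0 < n) (g h : Fin n → ℝ) :
    (⨆ j, (g j + h j)) ≤ (⨆ j, g j) + ⨆ j, h j := by
  obtain ⟨k, hk, _⟩ := exists_sup_eq hn (fun m => g m + h m)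
  obtain ⟨i, hi, hile⟩ := exists_sup_eq hn g
  obtain ⟨j, hj, hjle⟩ := exists_sup_eq hn h
  rw [hk, hi, hj]
  exact add_le_add (hile k) (hjle k)

lemma sup_add_comono {n : ℕ} (hn : 0 < n) (g h : Fin n → ℝ)
    (hc : ∀ i j, 0 ≤ (g i - g j) * (h i - h j)) :
    ⨆ j, (g j + h j) = (⨆ j, g j) + ⨆ j, h j := by
  haveI : Nonempty (Fin n) := ⟨⟨0, hn⟩⟩
  obtain ⟨i, hgi, hgle⟩ := exists_sup_eq hn g
  obtain ⟨j, hhj, hhle⟩ := exists_sup_eq hn h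
  apply le_antisymm
  · obtain ⟨k, hk, _⟩ := exists_sup_eq hn (fun m => g m + h m)
    rw [hk, hgi, hhj]
    exact add_le_add (hgle k) (hhle k)
  · rcases le_or_gt (g i) (g j) with hij | hij
    · have hji : g j = g i := le_antisymm (hgle j) hij
      rw [hgi, hhj, ← hji]
      exact le_ciSup (f := fun m => g m + h m) (Set.finite_range _).bddAbove j
    · have hhi : h j ≤ h i := by nlinarith [hc i j]
      have hhe : h i = h j := le_antisymm (hhle i) hhi
      rw [hgi, hhj, ← hhe]
      exact le_ciSup (f := fun m => g m + h m) (Set.finite_range _).bddAbove i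

lemma sup_meas {n : ℕ} (hn : 0 < n) {α : Type*} [MeasurableSpace α] {g : Fin n → α → ℝ}
    (hg : ∀ i, Measurable (g i)) : Measurable (fun a => ⨆ i, g i a) := by
  haveI : Nonempty (Fin n) := ⟨⟨0, hn⟩⟩
  have heq : (fun a => ⨆ i, g i a) = Finset.univ.sup' Finset.univ_nonempty g := by
    ext a
    rw [Finset.sup'_apply, Finset.sup'_univ_eq_ciSup]
  rw [heq]
  exact Finset.measurable_sup' _ (fun i _ => hg i)

lemma comono_sup {Ω : Type*} {n : ℕ} (hn : 0 < n) {X Y : Ω → ℝ} (h : Comonotonic X Y) :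
    Comonotonic (fun ω : Fin n → Ω => ⨆ i, X (ω i)) (fun ω : Fin n → Ω => ⨆ i, Y (ω i)) := by
  have key : ∀ ω ω' : Fin n → Ω, (⨆ i, X (ω' i)) < (⨆ i, X (ω i)) →
      (⨆ i, Y (ω' i)) ≤ ⨆ i, Y (ω i) := by
    intro ω ω' hlt
    obtain ⟨i, hXi, _⟩ := exists_sup_eq hn (fun k => X (ω k))
    obtain ⟨j, hYj, _⟩ := exists_sup_eq hn (fun k => Y (ω' k))
    obtain ⟨i', hXi', hXle'⟩ := exists_sup_eq hn (fun k => X (ω' k))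
    rw [hXi, hXi'] at hlt
    have hXlt : X (ω' j) < X (ω i) := lt_of_le_of_lt (hXle' j) hlt
    have hcom := h (ω i) (ω' j)
    have hY : Y (ω' j) ≤ Y (ω i) := by nlinarith
    rw [hYj]
    refine le_trans hY ?_
    obtain ⟨k, hYk, hYkle⟩ := exists_sup_eq hn (fun m => Y (ω m))
    rw [hYk]
    exact hYkle i
  intro ω ω'
  rcases lt_trichotomy (⨆ i, X (ω' i)) (⨆ i, X (ω i)) with hlt | heq | hgt
  · have := key ω ω' hlt
    dsimp only
    nlinarith
  · dsimp only
    rw [heq]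
    simp
  · have := key ω' ω hgt
    dsimp only
    nlinarith

end RMESAux

open RMESAux in
theorem rmes_coherent_comonotonic_additive {Ω : Type*} [MeasurableSpace Ω]
    (n : ℕ) (hn : 0 < n) (Q : Fin n → Measure Ω)
    (hprob : ∀ i, IsProbabilityMeasure (Q i))
    (hdist : ∀ i j, i ≠ j → Q i ≠ Q j)
    (p : ℝ) (hp : p ∈ Set.Ioo (0 : ℝ) 1) :
    (∀ X : Ω → ℝ, Measurable X → BddRV X → ∀ c : ℝ,
        rMES Q (fun ω => X ω + c) p = rMES Q X p + c) ∧
    (∀ X Y : Ω → ℝ, Measurable X → Measurable Y → BddRV X → BddRV Y →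
        (∀ ω, X ω ≤ Y ω) → rMES Q X p ≤ rMES Q Y p) ∧
    (∀ X : Ω → ℝ, Measurable X → BddRV X → ∀ l : ℝ, 0 < l →
        rMES Q (fun ω => l * X ω) p = l * rMES Q X p) ∧
    (∀ X Y : Ω → ℝ, Measurable X → Measurable Y → BddRV X → BddRV Y →
        rMES Q (fun ω => X ω + Y ω) p ≤ rMES Q X p + rMES Q Y p) ∧
    (∀ X Y : Ω → ℝ, Measurable X → Measurable Y → BddRV X → BddRV Y →
        Comonotonic X Y →
        rMES Q (fun ω => X ω + Y ω) p = rMES Q X p + rMES Q Y p) := by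
  haveI : ∀ i, IsProbabilityMeasure (Q i) := hprob
  haveI : IsProbabilityMeasure (Measure.pi Q) := inferInstance
  refine ⟨?_, ?_, ?_, ?_, ?_⟩
  · -- cash invariance
    rintro X hX ⟨M, hM⟩ c
    have hfun : (fun ω : Fin n → Ω => ⨆ i, (X (ω i) + c)) =
        fun ω : Fin n → Ω => (⨆ i, X (ω i)) + c :=
      funext fun ω => sup_add_const hn _ c
    show ES (Measure.pi Q) (fun ω : Fin n → Ω => ⨆ i, (X (ω i) + c)) p = _ + c
    rw [hfun]
    exact es_translate (sup_meas hn (fun i => hX.comp (measurable_pi_apply i)))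
      (fun ω => sup_abs_le hn _ (fun j => hM _)) hp c
  · -- monotonicity
    rintro X Y hX hY ⟨M, hM⟩ ⟨N, hN⟩ hXY
    exact es_mono (sup_meas hn (fun i => hX.comp (measurable_pi_apply i)))
      (sup_meas hn (fun i => hY.comp (measurable_pi_apply i)))
      (fun ω => sup_abs_le hn _ (fun j => hM _))
      (fun ω => sup_abs_le hn _ (fun j => hN _)) hp
      (fun ω => sup_mono hn _ _ (fun j => hXY (ω j)))
  · -- positive homogeneity
    rintro X hX ⟨M, hM⟩ l hl
    have hfun : (fun ω : Fin n → Ω => ⨆ i, l * X (ω i)) =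
        fun ω : Fin n → Ω => l * ⨆ i, X (ω i) :=
      funext fun ω => sup_const_mul hn _ hl
    show ES (Measure.pi Q) (fun ω : Fin n → Ω => ⨆ i, l * X (ω i)) p = _
    rw [hfun]
    exact es_smul (sup_meas hn (fun i => hX.comp (measurable_pi_apply i)))
      (fun ω => sup_abs_le hn _ (fun j => hM _)) hp hl
  · -- subadditivity
    rintro X Y hX hY ⟨M, hM⟩ ⟨N, hN⟩
    have hTX : Measurable (fun ω : Fin n → Ω => ⨆ i, X (ω i)) :=
      sup_meas hn (fun i => hX.comp (measurable_pi_apply i))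
    have hTY : Measurable (fun ω : Fin n → Ω => ⨆ i, Y (ω i)) :=
      sup_meas hn (fun i => hY.comp (measurable_pi_apply i))
    have hTXb : ∀ ω : Fin n → Ω, |⨆ i, X (ω i)| ≤ M :=
      fun ω => sup_abs_le hn _ (fun j => hM _)
    have hTYb : ∀ ω : Fin n → Ω, |⨆ i, Y (ω i)| ≤ N :=
      fun ω => sup_abs_le hn _ (fun j => hN _)
    have hTXY : Measurable (fun ω : Fin n → Ω => ⨆ i, (X (ω i) + Y (ω i))) :=
      sup_meas hn (fun i => (hX.comp (measurable_pi_apply i)).add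
        (hY.comp (measurable_pi_apply i)))
    have hTXYb : ∀ ω : Fin n → Ω, |⨆ i, (X (ω i) + Y (ω i))| ≤ M + N :=
      fun ω => sup_abs_le hn _ (fun j => (abs_add_le _ _).trans (add_le_add (hM _) (hN _)))
    have hstep : ES (Measure.pi Q) (fun ω : Fin n → Ω => ⨆ i, (X (ω i) + Y (ω i))) p ≤
        ES (Measure.pi Q)
          (fun ω : Fin n → Ω => (⨆ i, X (ω i)) + ⨆ i, Y (ω i)) p :=
      es_mono hTXY (hTX.add hTY) hTXYb
        (fun ω => (abs_add_le _ _).trans (add_le_add (hTXb ω) (hTYb ω))) hp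
        (fun ω => sup_add_le hn _ _)
    exact hstep.trans (es_subadd hTX hTY hTXb hTYb hp)
  · -- comonotonic additivity
    rintro X Y hX hY ⟨M, hM⟩ ⟨N, hN⟩ hcom
    have hfun : (fun ω : Fin n → Ω => ⨆ i, (X (ω i) + Y (ω i))) =
        fun ω : Fin n → Ω => (⨆ i, X (ω i)) + ⨆ i, Y (ω i) :=
      funext fun ω => sup_add_comono hn _ _ (fun i j => hcom (ω i) (ω j))
    show ES (Measure.pi Q) (fun ω : Fin n → Ω => ⨆ i, (X (ω i) + Y (ω i))) p = _
    rw [hfun]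
    exact es_comono_add (sup_meas hn (fun i => hX.comp (measurable_pi_apply i)))
      (sup_meas hn (fun i => hY.comp (measurable_pi_apply i)))
      (fun ω => sup_abs_le hn _ (fun j => hM _))
      (fun ω => sup_abs_le hn _ (fun j => hN _)) hp
      (comono_sup hn hcom)
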